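/- Let V_k, V̂_k be real n×k matrices with V_k^T V_k = V̂_k^T V̂_k = I_k, let G be a complex diagonal n×n matrix with max_i |G_{ii}| ≤ M, and let F be a complex k×k matrix. Define H = V_k^T G V_k + F and Ĥ = V̂_k^T G V̂_k + F, and assume ‖H^{-1}‖ ≤ γ and ‖Ĥ^{-1}‖ ≤ γ. Then ‖V_k H^{-1} V_k^T − V̂_k Ĥ^{-1} V̂_k^T‖ ≤ 2(γ + γ²M)‖V_k − V̂_k‖ in spectral norm. -/

import Mathlib

open scoped Matrix Matrix.Norms.L2Operator

lemma diag_l2_norm_le {n : ℕ} (g : Fin n → ℂ) (M : ℝ) (hM : 0 ≤ M)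
    (hg : ∀ i, ‖g i‖ ≤ M) :
    ‖(Matrix.diagonal g : Matrix (Fin n) (Fin n) ℂ)‖ ≤ M := by
  rw [Matrix.l2_opNorm_def]
  refine ContinuousLinearMap.opNorm_le_bound _ hM fun x => ?_
  have hx : ((Matrix.toEuclideanLin.trans LinearMap.toContinuousLinearMap)
      (Matrix.diagonal g)) x = Matrix.toEuclideanLin (Matrix.diagonal g) x := rfl
  rw [hx, Matrix.toEuclideanLin_apply]
  rw [EuclideanSpace.norm_eq, EuclideanSpace.norm_eq]
  have hle : ∀ i ∈ Finset.univ, ‖((WithLp.equiv 2 _).symm (Matrix.diagonal g *ᵥ (WithLp.equiv 2 _) x)) i‖ ^ 2 ≤ M ^ 2 * ‖x i‖ ^ 2 := by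
    intro i _
    have : ((WithLp.equiv 2 _).symm (Matrix.diagonal g *ᵥ (WithLp.equiv 2 _) x)) i
        = g i * x i := by
      simp [Matrix.mulVec_diagonal]
    rw [this, norm_mul]
    have h1 : ‖g i‖ * ‖x i‖ ≤ M * ‖x i‖ :=
      mul_le_mul_of_nonneg_right (hg i) (norm_nonneg _)
    rw [mul_pow]
    exact mul_le_mul_of_nonneg_right (pow_le_pow_left₀ (norm_nonneg _) (hg i) 2) (sq_nonneg _)
  calc Real.sqrt (∑ i, ‖((WithLp.equiv 2 _).symm (Matrix.diagonal g *ᵥ (WithLp.equiv 2 _) x)) i‖ ^ 2)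
      ≤ Real.sqrt (∑ i, M ^ 2 * ‖x i‖ ^ 2) :=
        Real.sqrt_le_sqrt (Finset.sum_le_sum hle)
    _ = M * Real.sqrt (∑ i, ‖x i‖ ^ 2) := by
        rw [← Finset.mul_sum, Real.sqrt_mul (sq_nonneg M), Real.sqrt_sq hM]

lemma mul3_norm_le {m n p q : ℕ}
    (A : Matrix (Fin m) (Fin n) ℂ) (B : Matrix (Fin n) (Fin p) ℂ) (C : Matrix (Fin p) (Fin q) ℂ) :
    ‖A * B * C‖ ≤ ‖A‖ * ‖B‖ * ‖C‖ :=
  (Matrix.l2_opNorm_mul _ _).trans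
    (mul_le_mul_of_nonneg_right (Matrix.l2_opNorm_mul _ _) (norm_nonneg _))

/-- perturbation bound when the spectral embedding V_k is replaced
by its refinement V̂_k. -/
theorem embedding_perturbation_bound {n k : ℕ}
    (Vk Vhat : Matrix (Fin n) (Fin k) ℝ)
    (hVk : Vkᵀ * Vk = 1) (hVhat : Vhatᵀ * Vhat = 1)
    (g : Fin n → ℂ) (M γ : ℝ)
    (hg : ∀ i, ‖g i‖ ≤ M)
    (F : Matrix (Fin k) (Fin k) ℂ)
    (H Hhat : Matrix (Fin k) (Fin k) ℂ)
    (hH : H = (Vk.map Complex.ofReal)ᵀ * Matrix.diagonal g * Vk.map Complex.ofReal + F)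
    (hHhat : Hhat = (Vhat.map Complex.ofReal)ᵀ * Matrix.diagonal g * Vhat.map Complex.ofReal + F)
    (hHinv : IsUnit H) (hHhatinv : IsUnit Hhat)
    (hbd1 : ‖H⁻¹‖ ≤ γ) (hbd2 : ‖Hhat⁻¹‖ ≤ γ) :
    ‖Vk.map Complex.ofReal * H⁻¹ * (Vk.map Complex.ofReal)ᵀ -
        Vhat.map Complex.ofReal * Hhat⁻¹ * (Vhat.map Complex.ofReal)ᵀ‖ ≤
      2 * (γ + γ ^ 2 * M) * ‖Vk.map Complex.ofReal - Vhat.map Complex.ofReal‖ := by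
  set W : Matrix (Fin n) (Fin k) ℂ := Vk.map Complex.ofReal with hW
  set Wh : Matrix (Fin n) (Fin k) ℂ := Vhat.map Complex.ofReal with hWh
  have hγ0 : 0 ≤ γ := le_trans (norm_nonneg _) hbd1
  -- degenerate case n = 0
  rcases Nat.eq_zero_or_pos n with hn | hn
  · subst hn
    have h1 : W * H⁻¹ * Wᵀ - Wh * Hhat⁻¹ * Whᵀ = 0 := Subsingleton.elim _ _
    have h2 : W - Wh = 0 := Subsingleton.elim _ _
    rw [h1, h2, norm_zero, norm_zero, mul_zero]
  have hM0 : 0 ≤ M := le_trans (norm_nonneg _) (hg ⟨0, hn⟩)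
  -- degenerate case k = 0
  rcases Nat.eq_zero_or_pos k with hk | hk
  · subst hk
    have hH0 : H⁻¹ = 0 := Subsingleton.elim _ _
    have hHh0 : Hhat⁻¹ = 0 := Subsingleton.elim _ _
    rw [hH0, hHh0, Matrix.mul_zero, Matrix.zero_mul, Matrix.mul_zero, Matrix.zero_mul,
      sub_zero, norm_zero]
    have : (0:ℝ) ≤ 2 * (γ + γ ^ 2 * M) := by positivity
    positivity
  haveI : Nonempty (Fin k) := ⟨⟨0, hk⟩⟩
  -- conjugate transposes equal transposes
  have hWH : Wᴴ = Wᵀ := by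
    ext i j; simp [hW, Matrix.conjTranspose_apply, Matrix.map_apply, Complex.conj_ofReal]
  have hWhH : Whᴴ = Whᵀ := by
    ext i j; simp [hWh, Matrix.conjTranspose_apply, Matrix.map_apply, Complex.conj_ofReal]
  -- orthonormality over ℂ
  have hmap : ∀ (V : Matrix (Fin n) (Fin k) ℝ), Vᵀ * V = 1 →
      (V.map Complex.ofReal)ᵀ * V.map Complex.ofReal = 1 := by
    intro V hV
    have h1 : (V.map Complex.ofReal)ᵀ = Vᵀ.map Complex.ofReal := (Matrix.transpose_map).symm
    have h2 : Vᵀ.map Complex.ofReal * V.map Complex.ofReal = (Vᵀ * V).map Complex.ofReal := by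
      ext i j
      simp [Matrix.mul_apply, Matrix.map_apply]
    rw [h1, h2, hV]
    exact Matrix.map_one _ Complex.ofReal_zero Complex.ofReal_one
  have hWW : Wᵀ * W = 1 := hmap Vk hVk
  have hWhWh : Whᵀ * Wh = 1 := hmap Vhat hVhat
  -- norm of identity
  have hone : ‖(1 : Matrix (Fin k) (Fin k) ℂ)‖ = 1 := by
    have h := Matrix.l2_opNorm_conjTranspose_mul_self (1 : Matrix (Fin k) (Fin k) ℂ)
    rw [Matrix.conjTranspose_one, mul_one] at h
    have hne : ‖(1 : Matrix (Fin k) (Fin k) ℂ)‖ ≠ 0 := by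
      simp only [ne_eq, norm_eq_zero]
      intro h0
      have := congrArg (fun A => A (Classical.arbitrary (Fin k)) (Classical.arbitrary (Fin k))) h0
      simp [Matrix.one_apply_eq] at this
    have h2 : ‖(1 : Matrix (Fin k) (Fin k) ℂ)‖ * 1 = ‖(1 : Matrix (Fin k) (Fin k) ℂ)‖ * ‖(1 : Matrix (Fin k) (Fin k) ℂ)‖ := by
      rw [mul_one]; exact h
    exact (mul_left_cancel₀ hne h2).symm
  have hnormsq : ∀ (V : Matrix (Fin n) (Fin k) ℂ), Vᴴ = Vᵀ → Vᵀ * V = 1 → ‖V‖ = 1 := by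
    intro V hVH hVV
    have h := Matrix.l2_opNorm_conjTranspose_mul_self V
    rw [hVH, hVV, hone] at h
    have h2 : (‖V‖ - 1) * (‖V‖ + 1) = 0 := by linear_combination -h
    rcases mul_eq_zero.mp h2 with h3 | h3
    · linarith
    · have := norm_nonneg V; linarith
  have hnW : ‖W‖ = 1 := hnormsq W hWH hWW
  have hnWh : ‖Wh‖ = 1 := hnormsq Wh hWhH hWhWh
  have hnWT : ‖Wᵀ‖ = 1 := by rw [← hWH, Matrix.l2_opNorm_conjTranspose, hnW]
  have hnWhT : ‖Whᵀ‖ = 1 := by rw [← hWhH, Matrix.l2_opNorm_conjTranspose, hnWh]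
  set E : Matrix (Fin n) (Fin k) ℂ := W - Wh with hE
  have hnET : ‖Eᵀ‖ = ‖E‖ := by
    have : Eᴴ = Eᵀ := by rw [hE, Matrix.conjTranspose_sub, hWH, hWhH, Matrix.transpose_sub]
    rw [← this, Matrix.l2_opNorm_conjTranspose]
  have hG : ‖(Matrix.diagonal g : Matrix (Fin n) (Fin n) ℂ)‖ ≤ M := diag_l2_norm_le g M hM0 hg
  -- resolvent identity
  have hdetH := (Matrix.isUnit_iff_isUnit_det H).mp hHinv
  have hdetHh := (Matrix.isUnit_iff_isUnit_det Hhat).mp hHhatinv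
  have hres : H⁻¹ - Hhat⁻¹ = Hhat⁻¹ * (Hhat - H) * H⁻¹ := by
    have : Hhat⁻¹ * (Hhat - H) * H⁻¹
        = Hhat⁻¹ * Hhat * H⁻¹ - Hhat⁻¹ * (H * H⁻¹) := by noncomm_ring
    rw [this, Matrix.nonsing_inv_mul _ hdetHh, Matrix.mul_nonsing_inv _ hdetH,
      Matrix.one_mul, Matrix.mul_one]
  -- bound on Hhat - H
  have hΔ : ‖Hhat - H‖ ≤ 2 * M * ‖E‖ := by
    have heq : Hhat - H = Whᵀ * Matrix.diagonal g * (Wh - W) + (Whᵀ - Wᵀ) * Matrix.diagonal g * W := by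
      rw [hHhat, hH]
      simp only [Matrix.mul_sub, Matrix.sub_mul]
      abel
    rw [heq]
    have h1 : ‖Whᵀ * Matrix.diagonal g * (Wh - W)‖ ≤ M * ‖E‖ := by
      refine (mul3_norm_le _ _ _).trans ?_
      rw [hnWhT, one_mul]
      have : ‖Wh - W‖ = ‖E‖ := by rw [hE, norm_sub_rev]
      rw [this]
      exact mul_le_mul_of_nonneg_right hG (norm_nonneg _)
    have h2 : ‖(Whᵀ - Wᵀ) * Matrix.diagonal g * W‖ ≤ M * ‖E‖ := by
      refine (mul3_norm_le _ _ _).trans ?_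
      rw [hnW, mul_one]
      have hWhW : ‖Whᵀ - Wᵀ‖ = ‖E‖ := by
        rw [norm_sub_rev, ← Matrix.transpose_sub, ← hE, hnET]
      rw [hWhW, mul_comm]
      exact mul_le_mul_of_nonneg_right hG (norm_nonneg _)
    have h3 := norm_add_le (Whᵀ * Matrix.diagonal g * (Wh - W))
      ((Whᵀ - Wᵀ) * Matrix.diagonal g * W)
    linarith
  -- decomposition
  have hdecomp : W * H⁻¹ * Wᵀ - Wh * Hhat⁻¹ * Whᵀ
      = E * H⁻¹ * Wᵀ + Wh * H⁻¹ * Eᵀ + Wh * (H⁻¹ - Hhat⁻¹) * Whᵀ := by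
    rw [hE, Matrix.transpose_sub]
    simp only [Matrix.mul_sub, Matrix.sub_mul]
    abel
  rw [hdecomp]
  have t1 : ‖E * H⁻¹ * Wᵀ‖ ≤ γ * ‖E‖ := by
    refine (mul3_norm_le _ _ _).trans ?_
    rw [hnWT, mul_one]
    calc ‖E‖ * ‖H⁻¹‖ ≤ ‖E‖ * γ := mul_le_mul_of_nonneg_left hbd1 (norm_nonneg _)
      _ = γ * ‖E‖ := mul_comm _ _
  have t2 : ‖Wh * H⁻¹ * Eᵀ‖ ≤ γ * ‖E‖ := by
    refine (mul3_norm_le _ _ _).trans ?_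
    rw [hnWh, one_mul, hnET]
    exact mul_le_mul_of_nonneg_right hbd1 (norm_nonneg _)
  have t3 : ‖Wh * (H⁻¹ - Hhat⁻¹) * Whᵀ‖ ≤ γ ^ 2 * (2 * M * ‖E‖) := by
    refine (mul3_norm_le _ _ _).trans ?_
    rw [hnWh, one_mul, hnWhT, mul_one, hres]
    calc ‖Hhat⁻¹ * (Hhat - H) * H⁻¹‖ ≤ ‖Hhat⁻¹‖ * ‖Hhat - H‖ * ‖H⁻¹‖ := mul3_norm_le _ _ _
      _ ≤ γ * (2 * M * ‖E‖) * γ := by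
          have h1 : ‖Hhat⁻¹‖ * ‖Hhat - H‖ ≤ γ * (2 * M * ‖E‖) :=
            mul_le_mul hbd2 hΔ (norm_nonneg _) hγ0
          exact mul_le_mul h1 hbd1 (norm_nonneg _) (by positivity)
      _ = γ ^ 2 * (2 * M * ‖E‖) := by ring
  calc ‖E * H⁻¹ * Wᵀ + Wh * H⁻¹ * Eᵀ + Wh * (H⁻¹ - Hhat⁻¹) * Whᵀ‖
      ≤ ‖E * H⁻¹ * Wᵀ‖ + ‖Wh * H⁻¹ * Eᵀ‖ + ‖Wh * (H⁻¹ - Hhat⁻¹) * Whᵀ‖ :=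
        norm_add₃_le
    _ ≤ γ * ‖E‖ + γ * ‖E‖ + γ ^ 2 * (2 * M * ‖E‖) := by
        exact add_le_add (add_le_add t1 t2) t3
    _ = 2 * (γ + γ ^ 2 * M) * ‖E‖ := by ring
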